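/- arXiv:1411.5874 — 5 statements merged into one kernel-verified Lean document; each statement's English description precedes it below -/
import Mathlib

section
/- Consider the finite graph R on six vertices x, y, z, a, u, v with edge set {(x,y),(y,z),(z,x),(a,u),(u,v),(v,a),(x,u),(y,v),(z,a)}. For every proper 3-coloring ν of R: if ν(a) = ν(x) then ν(u) = ν(y), and if ν(a) = ν(y) then ν(u) = ν(z). -/
/-- The vertices of the prism widget R. -/
inductive WidgetR : Type
  | x | y | z | a | u | v
  deriving DecidableEq

/-- ν is a proper 3-coloring of the prism widget: two triangles {x,y,z} and
{a,u,v} joined by the perfect matching x–u, y–v, z–a. -/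
def WidgetR.Proper (ν : WidgetR → Fin 3) : Prop :=
  ν .x ≠ ν .y ∧ ν .y ≠ ν .z ∧ ν .z ≠ ν .x ∧
  ν .a ≠ ν .u ∧ ν .u ≠ ν .v ∧ ν .v ≠ ν .a ∧
  ν .x ≠ ν .u ∧ ν .y ≠ ν .v ∧ ν .z ≠ ν .a

/-- In every proper 3-coloring of the prism widget R: if a is colored like x
then u is colored like y, and if a is colored like y then u is colored like z. -/
theorem stmt_7 (ν : WidgetR → Fin 3) (hν : WidgetR.Proper ν) :
    (ν .a = ν .x → ν .u = ν .y) ∧ (ν .a = ν .y → ν .u = ν .z) := by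
  unfold WidgetR.Proper at hν
  revert hν
  generalize ν .x = px
  generalize ν .y = py
  generalize ν .z = pz
  generalize ν .a = pa
  generalize ν .u = pu
  generalize ν .v = pv
  revert px py pz pa pu pv
  decide
end

section
/- Consider the finite graph R on six vertices x, y, z, a, u, v with edge set {(x,y),(y,z),(z,x),(a,u),(u,v),(v,a),(x,u),(y,v),(z,a)}. (1) Every proper 3-coloring of the subgraph induced by {x,y,z,a} (note a is adjacent to z only among these) extends to a proper 3-coloring of R. (2) In every proper 3-coloring ν of R: if ν(u) = ν(y) or ν(v) = ν(z) then ν(a) = ν(x), and if ν(u) = ν(z) or ν(v) = ν(x) then ν(a) = ν(y). -/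
instance : Fintype WidgetR where
  elems := {.x, .y, .z, .a, .u, .v}
  complete := by intro t; cases t <;> decide

set_option maxRecDepth 100000 in
/-- (1) Every proper 3-coloring of the subgraph of R induced by {x,y,z,a}
extends to a proper 3-coloring of R.  (2) In every proper 3-coloring ν of R,
the color of u (resp. v) determines the color of a: if ν u = ν y or ν v = ν z
then ν a = ν x, and if ν u = ν z or ν v = ν x then ν a = ν y. -/
theorem stmt_8 :
    (∀ cx cy cz ca : Fin 3, cx ≠ cy → cy ≠ cz → cz ≠ cx → cz ≠ ca →
      ∃ ν : WidgetR → Fin 3, WidgetR.Proper ν ∧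
        ν .x = cx ∧ ν .y = cy ∧ ν .z = cz ∧ ν .a = ca) ∧
    (∀ ν : WidgetR → Fin 3, WidgetR.Proper ν →
      ((ν .u = ν .y ∨ ν .v = ν .z) → ν .a = ν .x) ∧
      ((ν .u = ν .z ∨ ν .v = ν .x) → ν .a = ν .y)) := by
  unfold WidgetR.Proper
  constructor
  · decide
  · decide
end

section
/- Let T ⊆ 2^{<ℕ} be an infinite tree with strings of every length, and fix a countable set of atoms {a_i : i ∈ ℕ}. To each binary string σ associate the clause θ_σ = ⋁_{i<|σ|} ℓ_i where ℓ_i = a_i if σ(i) = 0 and ℓ_i = ¬a_i if σ(i) = 1. Then the set of clauses C = {θ_σ : σ ∉ T} is finitely satisfiable: for every n, the truth assignment t(a_i) := τ(i) obtained from any τ ∈ T of length n satisfies every clause θ_σ with σ ∉ T and |σ| ≤ n. -/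
/-- Let T be a tree with strings of every length.  For any τ ∈ T of length n,
the truth assignment t(a_i) := τ(i) satisfies every clause θ_σ for σ ∉ T with
|σ| ≤ n; i.e., for every such σ there is i < |σ| with σ(i) ≠ τ(i). -/
theorem stmt_11 (T : Set (List Bool))
    (htree : ∀ σ ∈ T, ∀ τ : List Bool, τ <+: σ → τ ∈ T)
    (hT : ∀ n : ℕ, ∃ σ ∈ T, σ.length = n)
    (n : ℕ) (τ : List Bool) (hτ : τ ∈ T) (hlen : τ.length = n) :
    ∀ σ : List Bool, σ ∉ T → σ.length ≤ n →
      ∃ i < σ.length, σ[i]? ≠ τ[i]? := by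
  intro σ hσ hσlen
  by_contra h
  push_neg at h
  apply hσ
  apply htree τ hτ
  have hσeq : σ = τ.take σ.length := by
    apply List.ext_getElem?
    intro i
    by_cases hi : i < σ.length
    · rw [List.getElem?_take_of_lt hi]
      exact h i hi
    · push_neg at hi
      rw [List.getElem?_eq_none_iff.2 hi, List.getElem?_eq_none_iff.2 (by simp; exact Or.inl hi)]
  rw [hσeq]
  exact List.take_prefix _ _
end

section
/- Let T ⊆ 2^{<ℕ} be an infinite tree and let X ⊆ ℕ be infinite, with increasing enumeration (x_i). Define S = {σ ∈ 2^{<ℕ} : ∃τ ∈ T with |τ| = x_{|σ|} and σ(i) = τ(x_i) for all i < |σ|}. Then S is an infinite tree (closed under prefixes and containing strings of every length). Moreover, if H₀ ⊆ ℕ is infinite and homogeneous for S with color c, then H = {x_i : i ∈ H₀} is an infinite subset of X that is homogeneous for T with color c. -/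
/-- The tree S obtained from T by restricting attention to the positions
enumerated by x. -/
def pullTree (T : Set (List Bool)) (x : ℕ → ℕ) : Set (List Bool) :=
  {σ | ∃ τ ∈ T, τ.length = x σ.length ∧
    ∀ i : ℕ, i < σ.length → σ[i]? = τ[x i]?}

/-- A ⊆ ℕ is homogeneous for a tree T with color c: infinitely many σ ∈ T
satisfy σ(n) = c for all n ∈ A below |σ|. -/
def HomFor (T : Set (List Bool)) (A : Set ℕ) (c : Bool) : Prop :=
  {σ ∈ T | ∀ n ∈ A, n < σ.length → σ[n]? = some c}.Infinite

lemma len_eq_finite (k : ℕ) : {l : List Bool | l.length = k}.Finite := by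
  apply (Set.finite_range (List.ofFn : (Fin k → Bool) → List Bool)).subset
  intro l hl
  subst hl
  exact ⟨l.get, List.ofFn_get l⟩

lemma len_le_finite (n : ℕ) : {l : List Bool | l.length ≤ n}.Finite := by
  have : {l : List Bool | l.length ≤ n} ⊆ ⋃ k ∈ Set.Iic n, {l | l.length = k} := by
    intro l hl
    exact Set.mem_biUnion hl rfl
  exact (Set.Finite.biUnion (Set.finite_Iic n) (fun k _ => len_eq_finite k)).subset this

lemma infinite_of_unbounded {S : Set (List Bool)} (h : ∀ n, ∃ l ∈ S, n ≤ l.length) :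
    S.Infinite := by
  by_contra h'
  rw [Set.not_infinite] at h'
  have hfin := h'
  obtain ⟨N, hN⟩ := (hfin.image List.length).bddAbove
  obtain ⟨l, hl, hlen⟩ := h (N + 1)
  have := hN (Set.mem_image_of_mem _ hl)
  omega

lemma unbounded_of_infinite {S : Set (List Bool)} (h : S.Infinite) :
    ∀ n, ∃ l ∈ S, n ≤ l.length := by
  intro n
  by_contra hc
  push_neg at hc
  exact h ((len_le_finite n).subset (fun l hl => le_of_lt (hc l hl)))

/-- Localization of RWKL: if T is an infinite tree and x is the increasing
enumeration of an infinite set X ⊆ ℕ, then S = pullTree T x is an infinite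
tree, and for any infinite H₀ homogeneous for S with color c, the image
H = x '' H₀ is an infinite subset of X homogeneous for T with color c. -/
theorem stmt_14 (T : Set (List Bool))
    (htree : ∀ σ ∈ T, ∀ τ : List Bool, τ <+: σ → τ ∈ T)
    (hT : T.Infinite) (x : ℕ → ℕ) (hx : StrictMono x) :
    (∀ σ ∈ pullTree T x, ∀ τ : List Bool, τ <+: σ → τ ∈ pullTree T x) ∧
    (∀ n : ℕ, ∃ σ ∈ pullTree T x, σ.length = n) ∧
    (∀ H₀ : Set ℕ, H₀.Infinite → ∀ c : Bool, HomFor (pullTree T x) H₀ c →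
      x '' H₀ ⊆ Set.range x ∧ (x '' H₀).Infinite ∧ HomFor T (x '' H₀) c) := by
  refine ⟨?_, ?_, ?_⟩
  · rintro σ ⟨τ', hτ'T, hlen, hget⟩ τ hpre
    have hτle : τ.length ≤ σ.length := hpre.length_le
    refine ⟨τ'.take (x τ.length), htree _ hτ'T _ (List.take_prefix _ _), ?_, ?_⟩
    · rw [List.length_take, hlen]
      exact min_eq_left (hx.monotone hτle)
    · intro i hi
      rw [List.getElem?_take_of_lt (hx hi)]
      rw [← hget i (lt_of_lt_of_le hi hτle)]
      obtain ⟨r, rfl⟩ := hpre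
      exact (List.getElem?_append_left hi).symm
  · intro n
    obtain ⟨τ₀, hτ₀T, hτ₀len⟩ := unbounded_of_infinite hT (x n)
    set τ := τ₀.take (x n) with hτ
    have hτT : τ ∈ T := htree _ hτ₀T _ (List.take_prefix _ _)
    have hτlen : τ.length = x n := by
      rw [hτ, List.length_take]; exact min_eq_left hτ₀len
    refine ⟨List.ofFn (fun i : Fin n => τ.get ⟨x i.val, by rw [hτlen]; exact hx i.isLt⟩),
      ⟨τ, hτT, by simp [hτlen], ?_⟩, by simp⟩
    intro i hi
    simp only [List.length_ofFn] at hi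
    rw [List.getElem?_ofFn, List.getElem?_eq_getElem (by rw [hτlen]; exact hx hi)]
    simp [hi]
  · intro H₀ hH₀ c hHom
    refine ⟨Set.image_subset_range x H₀, hH₀.image (hx.injective.injOn), ?_⟩
    apply infinite_of_unbounded
    intro n
    obtain ⟨σ, hσ, hσlen⟩ := unbounded_of_infinite hHom n
    obtain ⟨⟨τ, hτT, hτlen, hτget⟩, hσhom⟩ := hσ
    refine ⟨τ, ⟨hτT, ?_⟩, ?_⟩
    · rintro m ⟨k, hkH₀, rfl⟩ hmlt
      have hk : k < σ.length := by
        rw [hτlen] at hmlt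
        exact hx.lt_iff_lt.mp hmlt
      rw [← hτget k hk]
      exact hσhom k hkH₀ hk
    · rw [hτlen]
      exact le_trans hσlen hx.le_apply
end

section
/- Let G be a graph on ℕ with no cycle of odd length, and suppose there are infinitely many pairs (x_n, y_n) of distinct vertices each connected by a walk of odd length in G. Form the graph G' with vertex set containing the x_n, y_n and fresh vertices a_n, b_n for each n, and edges (x_n, a_n), (a_n, b_n), (b_n, y_n). Then G' has no cycle of odd length. -/
/-- The relation generating the graph G': for each n, edges (x_n, a_n),
(a_n, b_n), (b_n, y_n), where a_n = inr (n, false) and b_n = inr (n, true). -/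
def linkRel (x y : ℕ → ℕ) : (ℕ ⊕ ℕ × Bool) → (ℕ ⊕ ℕ × Bool) → Prop
  | Sum.inl u, Sum.inr (n, false) => u = x n
  | Sum.inr (n, false), Sum.inr (m, true) => n = m
  | Sum.inr (n, true), Sum.inl u => u = y n
  | _, _ => False

open SimpleGraph

/-- In a path from `w` to `u` with `u ≠ w`, if the edge `s(u, w)` occurs then the
path has length 1. -/
lemma aux_path_edge {V : Type} {G : SimpleGraph V} {w u : V} (t : G.Walk w u)
    (ht : t.IsPath) (hne : u ≠ w) (he : s(u, w) ∈ t.edges) : t.length = 1 := by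
  cases t with
  | nil => simp at he
  | @cons _ z _ h' t' =>
    simp only [Walk.edges_cons, List.mem_cons] at he
    rcases he with he | he
    · rw [Sym2.eq_iff] at he
      rcases he with ⟨h1, h2⟩ | ⟨h1, h2⟩
      · exact absurd h1 hne
      · subst h1
        have ht' : t'.IsPath := ht.of_cons
        rw [Walk.isPath_iff_eq_nil] at ht'
        subst ht'
        simp
    · have hw : w ∈ t'.support := Walk.snd_mem_support_of_mem_edges t' he
      have := ht.support_nodup
      rw [Walk.support_cons, List.nodup_cons] at this
      exact absurd hw this.1

/-- Every walk either yields an odd cycle somewhere in the graph, or there is a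
path with the same endpoints and the same parity of length. -/
lemma aux_parity_path {V : Type} {G : SimpleGraph V} :
    ∀ {u v : V} (p : G.Walk u v),
      (∃ w, ∃ c : G.Walk w w, c.IsCycle ∧ Odd c.length) ∨
      ∃ q : G.Walk u v, q.IsPath ∧ q.length % 2 = p.length % 2 := by
  classical
  intro u v p
  induction p with
  | nil => exact Or.inr ⟨Walk.nil, Walk.IsPath.nil, rfl⟩
  | @cons u w v h p' ih =>
    rcases ih with hcyc | ⟨q', hq', hpar⟩
    · exact Or.inl hcyc
    by_cases hu : u ∈ q'.support
    · have hspec := q'.take_spec hu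
      have hlen : (q'.takeUntil u hu).length + (q'.dropUntil u hu).length = q'.length := by
        have := congrArg Walk.length hspec
        rwa [Walk.length_append] at this
      have htp : (q'.takeUntil u hu).IsPath := hq'.takeUntil hu
      rcases Nat.even_or_odd (q'.takeUntil u hu).length with hev | hod
      · -- extract an odd cycle
        left
        refine ⟨u, Walk.cons h (q'.takeUntil u hu), ?_, ?_⟩
        · rw [Walk.cons_isCycle_iff]
          refine ⟨htp, fun hmem => ?_⟩
          have := aux_path_edge _ htp h.ne hmem
          rw [this] at hev
          simp at hev
        · rw [Walk.length_cons]
          exact Even.add_one hev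
      · right
        refine ⟨q'.dropUntil u hu, hq'.dropUntil hu, ?_⟩
        rw [Walk.length_cons]
        rcases hod with ⟨k, hk⟩
        omega
    · right
      refine ⟨Walk.cons h q', hq'.cons hu, ?_⟩
      simp only [Walk.length_cons]
      omega

/-- If a graph has no odd cycle, it has no closed walk of odd length. -/
lemma aux_no_odd_closed {V : Type} {G : SimpleGraph V}
    (hodd : ∀ (v : V) (p : G.Walk v v), p.IsCycle → ¬ Odd p.length) :
    ∀ (v : V) (p : G.Walk v v), ¬ Odd p.length := by
  intro v p hp
  rcases aux_parity_path p with ⟨w, c, hc, hco⟩ | ⟨q, hq, hpar⟩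
  · exact hodd w c hc hco
  · rw [Walk.isPath_iff_eq_nil] at hq
    subst hq
    rw [Nat.odd_iff] at hp
    simp at hpar
    omega

/-- Projection from the vertices of G' to vertices of G. -/
def projV (x y : ℕ → ℕ) : ℕ ⊕ ℕ × Bool → ℕ
  | Sum.inl u => u
  | Sum.inr (n, false) => x n
  | Sum.inr (n, true) => y n

/-- Parity potential on vertices of G'. -/
def potV : ℕ ⊕ ℕ × Bool → ℕ
  | Sum.inl _ => 0
  | Sum.inr _ => 1

lemma aux_link_walk {G : SimpleGraph ℕ} {x y : ℕ → ℕ}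
    (hwalk : ∀ n, ∃ p : G.Walk (x n) (y n), Odd p.length) :
    ∀ {v w : ℕ ⊕ ℕ × Bool}, linkRel x y v w →
      ∃ q : G.Walk (projV x y v) (projV x y w),
        q.length % 2 = (1 + potV v + potV w) % 2
  | Sum.inl u, Sum.inr (n, false), hr => by
      subst hr; exact ⟨Walk.nil, by simp [potV]; exact rfl⟩
  | Sum.inr (n, false), Sum.inr (m, true), hr => by
      subst hr
      obtain ⟨p, hp⟩ := hwalk n
      rw [Nat.odd_iff] at hp
      exact ⟨p, by simp [potV, hp]; exact hp⟩
  | Sum.inr (n, true), Sum.inl u, hr => by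
      subst hr; exact ⟨Walk.nil, by simp [potV]; exact rfl⟩
  | Sum.inl _, Sum.inl _, hr => by exact hr.elim
  | Sum.inl _, Sum.inr (_, true), hr => by exact hr.elim
  | Sum.inr (_, false), Sum.inl _, hr => by exact hr.elim
  | Sum.inr (_, false), Sum.inr (_, false), hr => by exact hr.elim
  | Sum.inr (_, true), Sum.inr _, hr => by exact hr.elim

lemma aux_edge_walk {G : SimpleGraph ℕ} {x y : ℕ → ℕ}
    (hwalk : ∀ n, ∃ p : G.Walk (x n) (y n), Odd p.length)
    {v w : ℕ ⊕ ℕ × Bool} (h : (SimpleGraph.fromRel (linkRel x y)).Adj v w) :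
    ∃ q : G.Walk (projV x y v) (projV x y w),
      q.length % 2 = (1 + potV v + potV w) % 2 := by
  rw [fromRel_adj] at h
  obtain ⟨-, hr | hr⟩ := h
  · exact aux_link_walk hwalk hr
  · obtain ⟨q, hq⟩ := aux_link_walk hwalk hr
    refine ⟨q.reverse, ?_⟩
    rw [Walk.length_reverse]
    omega

lemma aux_shadow {G : SimpleGraph ℕ} {x y : ℕ → ℕ}
    (hwalk : ∀ n, ∃ p : G.Walk (x n) (y n), Odd p.length) :
    ∀ {v w : ℕ ⊕ ℕ × Bool} (p : (SimpleGraph.fromRel (linkRel x y)).Walk v w),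
      ∃ q : G.Walk (projV x y v) (projV x y w),
        q.length % 2 = (p.length + potV v + potV w) % 2 := by
  intro v w p
  induction p with
  | nil =>
    rename_i z
    exact ⟨Walk.nil, by rcases z with u | ⟨n, b⟩ <;> simp [potV]⟩
  | @cons v v' w h p' ih =>
    obtain ⟨e, he⟩ := aux_edge_walk hwalk h
    obtain ⟨q, hq⟩ := ih
    refine ⟨e.append q, ?_⟩
    rw [Walk.length_append, Walk.length_cons]
    omega

/-- Suppose G is a graph on ℕ with no odd cycle and (x_n, y_n) is an infinite
family of distinct pairs of distinct vertices, each joined by an odd-length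
walk in G.  Then the graph G' with fresh vertices a_n, b_n and edges
(x_n, a_n), (a_n, b_n), (b_n, y_n) has no odd cycle. -/
theorem stmt_18 (G : SimpleGraph ℕ)
    (hodd : ∀ (v : ℕ) (p : G.Walk v v), p.IsCycle → ¬ Odd p.length)
    (x y : ℕ → ℕ) (hxy : ∀ n, x n ≠ y n)
    (hinj : Function.Injective (fun n => (x n, y n)))
    (hwalk : ∀ n, ∃ p : G.Walk (x n) (y n), Odd p.length) :
    ∀ (v : ℕ ⊕ ℕ × Bool) (p : (SimpleGraph.fromRel (linkRel x y)).Walk v v),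
      p.IsCycle → ¬ Odd p.length := by
  intro v p _ hp
  obtain ⟨q, hq⟩ := aux_shadow hwalk p
  have hno := aux_no_odd_closed hodd (projV x y v) q
  rw [Nat.odd_iff] at hp
  rw [Nat.odd_iff] at hno
  apply hno
  rcases v with u | ⟨n, b⟩ <;> simp [potV] at hq <;> omega
end
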